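/- Let 0 < ε < 1, δ = √(2ε), and let P ⊆ ℝ² be a finite nonempty set. Suppose Q ⊆ P is a subset such that for every integer i with 1 ≤ i ≤ ⌈π/δ⌉, Q contains some point of P maximizing p ↦ ⟨u_i, p⟩ over P and some point of P minimizing p ↦ ⟨u_i, p⟩ over P. Then diam(Q) ≥ (1−ε)·diam(P). -/

import Mathlib

open Real RealInnerProductSpace

/-- The point of the Euclidean plane with coordinates `(a, b)`. -/
noncomputable def pt (a b : ℝ) : EuclideanSpace ℝ (Fin 2) :=
  (WithLp.equiv 2 (Fin 2 → ℝ)).symm ![a, b]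

/-- The diameter of a finite nonempty point set: `max_{p, q ∈ P} ‖p - q‖`. -/
noncomputable def fdiam (P : Finset (EuclideanSpace ℝ (Fin 2))) (hP : P.Nonempty) : ℝ :=
  (P ×ˢ P).sup' (hP.product hP) (fun pq => dist pq.1 pq.2)

lemma key (a b : ℝ) : ∃ θ : ℝ, 0 < θ ∧ θ ≤ π ∧
    ∀ φ : ℝ, Real.sqrt (a ^ 2 + b ^ 2) * Real.cos (φ - θ) ≤ |a * Real.cos φ + b * Real.sin φ| := by
  by_cases hz : a = 0 ∧ b = 0
  · exact ⟨π, Real.pi_pos, le_refl _, fun φ => by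
      simp [hz.1, hz.2, abs_nonneg]⟩
  · set z : ℂ := ⟨a, b⟩ with hzdef
    have hz0 : z ≠ 0 := by
      intro h
      rw [Complex.ext_iff] at h
      exact hz ⟨h.1, h.2⟩
    have habs : ‖z‖ = Real.sqrt (a ^ 2 + b ^ 2) := by
      rw [Complex.norm_def, hzdef, Complex.normSq_mk]; ring_nf
    have hD : (0 : ℝ) < ‖z‖ := by
      simpa using (norm_pos_iff.mpr hz0)
    have hcos : Real.cos z.arg = a / ‖z‖ := Complex.cos_arg hz0
    have hsin : Real.sin z.arg = b / ‖z‖ := Complex.sin_arg z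
    have hexp : ∀ φ : ℝ, a * Real.cos φ + b * Real.sin φ =
        ‖z‖ * Real.cos (φ - z.arg) := by
      intro φ
      rw [Real.cos_sub, hcos] at *
      rw [hsin]
      field_simp
    by_cases harg : 0 < z.arg
    · refine ⟨z.arg, harg, Complex.arg_le_pi z, fun φ => ?_⟩
      rw [← habs, ← hexp φ]
      exact le_abs_self _
    · refine ⟨z.arg + π, by linarith [Complex.neg_pi_lt_arg z], by linarith [not_lt.mp harg], fun φ => ?_⟩
      have : Real.cos (φ - (z.arg + π)) = - Real.cos (φ - z.arg) := by
        rw [show φ - (z.arg + π) = (φ - z.arg) - π by ring, Real.cos_sub_pi]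
      rw [← habs, this, mul_neg, ← hexp φ]
      exact neg_le_abs _

lemma inner_pt (a b : ℝ) (x : EuclideanSpace ℝ (Fin 2)) :
    ⟪pt a b, x⟫ = a * x 0 + b * x 1 := by
  simp [pt, PiLp.inner_apply, Fin.sum_univ_two, WithLp.equiv_symm_apply, WithLp.ofLp_toLp, mul_comm]

theorem extreme_points_diameter
    (ε : ℝ) (hε0 : 0 < ε) (hε1 : ε < 1)
    (δ : ℝ) (hδ : δ = Real.sqrt (2 * ε))
    (P Q : Finset (EuclideanSpace ℝ (Fin 2))) (hP : P.Nonempty) (hQ : Q.Nonempty)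
    (hQP : Q ⊆ P)
    (hmax : ∀ i : ℕ, 1 ≤ i → i ≤ ⌈Real.pi / δ⌉₊ →
      ∃ q ∈ Q, ∀ p ∈ P, ⟪pt (Real.cos (i * δ)) (Real.sin (i * δ)), p⟫ ≤
        ⟪pt (Real.cos (i * δ)) (Real.sin (i * δ)), q⟫)
    (hmin : ∀ i : ℕ, 1 ≤ i → i ≤ ⌈Real.pi / δ⌉₊ →
      ∃ q ∈ Q, ∀ p ∈ P, ⟪pt (Real.cos (i * δ)) (Real.sin (i * δ)), q⟫ ≤
        ⟪pt (Real.cos (i * δ)) (Real.sin (i * δ)), p⟫) :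
    fdiam Q hQ ≥ (1 - ε) * fdiam P hP := by
  have hδ0 : 0 < δ := by rw [hδ]; positivity
  have hδsq : δ ^ 2 = 2 * ε := by rw [hδ]; exact Real.sq_sqrt (by positivity)
  have hδpi : δ ≤ π := by
    have h2 : Real.sqrt (2 * ε) ≤ Real.sqrt 2 := Real.sqrt_le_sqrt (by linarith)
    have h3 : Real.sqrt 2 ≤ π := by
      nlinarith [Real.sq_sqrt (show (0:ℝ) ≤ 2 by norm_num), Real.sqrt_nonneg 2,
        Real.pi_gt_three]
    linarith [hδ ▸ h2]
  -- diameter of P attained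
  obtain ⟨⟨p, q⟩, hpqmem, hpqeq⟩ := Finset.exists_mem_eq_sup' (hP.product hP)
    (fun pq : _ × _ => dist pq.1 pq.2)
  rw [Finset.mem_product] at hpqmem
  have hQnonneg : 0 ≤ fdiam Q hQ := by
    obtain ⟨x, hx⟩ := hQ
    have := Finset.le_sup' (fun pq : EuclideanSpace ℝ (Fin 2) × EuclideanSpace ℝ (Fin 2) =>
        dist pq.1 pq.2)
      (show ((x, x)) ∈ Q ×ˢ Q from Finset.mem_product.mpr ⟨hx, hx⟩)
    simp only [dist_self] at this; exact this
  set a := (p - q : EuclideanSpace ℝ (Fin 2)) 0 with ha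
  set b := (p - q : EuclideanSpace ℝ (Fin 2)) 1 with hb
  have hdist : dist p q = Real.sqrt (a ^ 2 + b ^ 2) := by
    rw [dist_eq_norm, EuclideanSpace.norm_eq, Fin.sum_univ_two]
    simp [ha, hb, Real.norm_eq_abs, sq_abs]
  obtain ⟨θ, hθ0, hθπ, hkey⟩ := key a b
  set i : ℕ := ⌈θ / δ⌉₊ with hi
  have hi1 : 1 ≤ i := Nat.one_le_iff_ne_zero.mpr (by
    simp [hi, Nat.ceil_eq_zero, not_le]
    positivity)
  have hile : i ≤ ⌈π / δ⌉₊ := Nat.ceil_le_ceil (by gcongr)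
  set φ := (i : ℝ) * δ with hφ
  have hic : θ / δ ≤ (i : ℝ) := by rw [hi]; exact_mod_cast Nat.le_ceil (θ / δ)
  have hic2 : (i : ℝ) < θ / δ + 1 := by
    rw [hi]
    exact_mod_cast Nat.ceil_lt_add_one (a := θ / δ) (by positivity)
  have hαnn : 0 ≤ φ - θ := by
    have h1 : θ ≤ (i : ℝ) * δ := (div_le_iff₀ hδ0).mp hic
    rw [hφ]; linarith
  have hαlt : φ - θ ≤ δ := by
    have h1 : ((i : ℝ) - 1) * δ < θ := (lt_div_iff₀ hδ0).mp (by linarith)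
    rw [hφ]; nlinarith
  have hcosge : 1 - ε ≤ Real.cos (φ - θ) := by
    have h1 : Real.cos δ ≤ Real.cos (φ - θ) :=
      Real.cos_le_cos_of_nonneg_of_le_pi hαnn hδpi hαlt
    have h2 : 1 - δ ^ 2 / 2 ≤ Real.cos δ := Real.one_sub_sq_div_two_le_cos
    rw [hδsq] at h2
    linarith
  obtain ⟨qmax, hqmaxQ, hqmax⟩ := hmax i hi1 hile
  obtain ⟨qmin, hqminQ, hqmin⟩ := hmin i hi1 hile
  set u := pt (Real.cos (i * δ)) (Real.sin (i * δ)) with hu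
  have hgap : |⟪u, p⟫ - ⟪u, q⟫| ≤ ⟪u, qmax⟫ - ⟪u, qmin⟫ := by
    rw [abs_sub_le_iff]
    constructor <;>
      linarith [hqmax p hpqmem.1, hqmax q hpqmem.2, hqmin p hpqmem.1, hqmin q hpqmem.2]
  have hval : ⟪u, p⟫ - ⟪u, q⟫ = a * Real.cos φ + b * Real.sin φ := by
    rw [hu, inner_pt, inner_pt, ha, hb, hφ]
    simp [PiLp.sub_apply]
    ring
  have hlow : (1 - ε) * dist p q ≤ ⟪u, qmax⟫ - ⟪u, qmin⟫ := by
    have h1 := hkey φ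
    rw [← hval] at h1
    have h3 := h1.trans hgap
    rw [hdist]
    nlinarith [Real.sqrt_nonneg (a ^ 2 + b ^ 2), hcosge, h3]
  have hnormu : ‖u‖ = 1 := by
    rw [hu, pt, EuclideanSpace.norm_eq, Fin.sum_univ_two]
    simp only [WithLp.equiv_symm_apply, WithLp.ofLp_toLp, Matrix.cons_val_zero, Matrix.cons_val_one,
      Matrix.head_cons, Real.norm_eq_abs, sq_abs]
    rw [Real.cos_sq_add_sin_sq, Real.sqrt_one]
  have hupper : ⟪u, qmax⟫ - ⟪u, qmin⟫ ≤ dist qmax qmin := by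
    have h1 : ⟪u, qmax⟫ - ⟪u, qmin⟫ = ⟪u, qmax - qmin⟫ := (inner_sub_right u qmax qmin).symm
    have h2 := real_inner_le_norm u (qmax - qmin)
    rw [h1, dist_eq_norm]
    rw [hnormu] at h2
    linarith
  have hfinal : dist qmax qmin ≤ fdiam Q hQ := by
    have := Finset.le_sup' (fun pq : EuclideanSpace ℝ (Fin 2) × EuclideanSpace ℝ (Fin 2) =>
        dist pq.1 pq.2)
      (show ((qmax, qmin)) ∈ Q ×ˢ Q from Finset.mem_product.mpr ⟨hqmaxQ, hqminQ⟩)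
    exact this
  have hPd : fdiam P hP = dist p q := hpqeq
  rw [ge_iff_le, hPd]
  linarith
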